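/- arXiv:1705.08381 — 2 statements merged into one kernel-verified Lean document; each statement's English description precedes it below -/
import Mathlib

section
/- For the three-dimensional exponentiated Hencky energy, the limiting value of χ at equal stretches λ_l = λ_k is μ·exp(k·Σⱼ(log λ̄ⱼ)²) - τ_k, where τ_k = 2μ·exp(k·Σⱼ(log λ̄ⱼ)²)·log λ̄_k + κ·exp(k̂·(Σⱼ log λⱼ)²)·Σⱼ log λⱼ and λ̄ⱼ = λⱼ/(λ₁λ₂λ₃)^{1/3}. -/
open Real Finset

noncomputable def sumL : (Fin 3 → ℝ) →L[ℝ] ℝ := ∑ m : Fin 3, ContinuousLinearMap.proj m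

lemma sumL_apply (v : Fin 3 → ℝ) : sumL v = ∑ m, v m := by
  simp [sumL]

lemma hasFDerivAt_sum3 (y : Fin 3 → ℝ) :
    HasFDerivAt (fun z : Fin 3 → ℝ => ∑ m, z m) sumL y := by
  simpa [sumL] using HasFDerivAt.fun_sum (u := Finset.univ)
    (fun m _ => (ContinuousLinearMap.proj (R := ℝ) (φ := fun _ : Fin 3 => ℝ) m).hasFDerivAt (x := y))

noncomputable def gL (i : Fin 3) : (Fin 3 → ℝ) →L[ℝ] ℝ :=
  ContinuousLinearMap.proj i - (3:ℝ)⁻¹ • sumL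

lemma gL_apply (i : Fin 3) (v : Fin 3 → ℝ) : gL i v = v i - (∑ m, v m) / 3 := by
  simp [gL, sumL_apply, div_eq_mul_inv, mul_comm]

lemma hasFDerivAt_g (i : Fin 3) (y : Fin 3 → ℝ) :
    HasFDerivAt (fun z : Fin 3 → ℝ => z i - (∑ m, z m) / 3) (gL i) y := by
  have h1 := (ContinuousLinearMap.proj (R := ℝ) (φ := fun _ : Fin 3 => ℝ) i).hasFDerivAt (x := y)
  have h2 := ((hasFDerivAt_sum3 y).mul_const ((3:ℝ)⁻¹))
  simpa [gL, div_eq_mul_inv, ContinuousLinearMap.proj_apply] using h1.fun_sub h2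

lemma hasFDerivAt_gsq (i : Fin 3) (y : Fin 3 → ℝ) :
    HasFDerivAt (fun z : Fin 3 → ℝ => (z i - (∑ m, z m) / 3) ^ 2)
      ((2 * (y i - (∑ m, y m) / 3)) • gL i) y := by
  have h := hasFDerivAt_g i y
  simpa [pow_two, two_mul, add_smul] using h.fun_mul h

lemma hasFDerivAt_ssq (y : Fin 3 → ℝ) :
    HasFDerivAt (fun z : Fin 3 → ℝ => (∑ m, z m) ^ 2) ((2 * ∑ m, y m) • sumL) y := by
  have h := hasFDerivAt_sum3 y
  simpa [pow_two, two_mul, add_smul] using h.fun_mul h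

lemma sum_g_zero (y : Fin 3 → ℝ) : ∑ i : Fin 3, (y i - (∑ m, y m) / 3) = 0 := by
  simp [Fin.sum_univ_three]; ring

lemma fderivW_single (μ κ k khat : ℝ) (hk : k ≠ 0) (hkhat : khat ≠ 0)
    (y : Fin 3 → ℝ) (j : Fin 3) :
    fderiv ℝ (fun z : Fin 3 → ℝ =>
        μ / k * Real.exp (k * ∑ i, (z i - (∑ m, z m) / 3) ^ 2)
        + κ / (2 * khat) * Real.exp (khat * (∑ m, z m) ^ 2)) y (Pi.single j 1)
    = 2 * μ * Real.exp (k * ∑ i, (y i - (∑ m, y m) / 3) ^ 2) * (y j - (∑ m, y m) / 3)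
      + κ * Real.exp (khat * (∑ m, y m) ^ 2) * (∑ m, y m) := by
  have hS : HasFDerivAt (fun z : Fin 3 → ℝ => ∑ i, (z i - (∑ m, z m) / 3) ^ 2)
      (∑ i : Fin 3, (2 * (y i - (∑ m, y m) / 3)) • gL i) y :=
    HasFDerivAt.fun_sum (fun i _ => hasFDerivAt_gsq i y)
  have h1 := ((hS.const_mul k).exp.const_mul (μ / k))
  have h2 := (((hasFDerivAt_ssq y).const_mul khat).exp.const_mul (κ / (2 * khat)))
  have hW := h1.fun_add h2
  rw [hW.fderiv]
  simp only [ContinuousLinearMap.add_apply, ContinuousLinearMap.smul_apply,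
    ContinuousLinearMap.sum_apply, gL_apply, sumL_apply, smul_eq_mul]
  have hsingle : ∑ m : Fin 3, (Pi.single j 1 : Fin 3 → ℝ) m = 1 := by
    simp [Finset.sum_pi_single']
  rw [hsingle]
  have hsum : ∑ i : Fin 3, 2 * (y i - (∑ m, y m) / 3) * ((Pi.single j 1 : Fin 3 → ℝ) i - 1 / 3)
      = 2 * (y j - (∑ m, y m) / 3) - (2/3) * ∑ i : Fin 3, (y i - (∑ m, y m) / 3) := by
    set s := ∑ m : Fin 3, y m with hs
    fin_cases j <;>
      simp [Fin.sum_univ_three, Pi.single_apply] <;> ring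
  rw [hsum, sum_g_zero]
  generalize Real.exp (k * ∑ i, (y i - (∑ m, y m) / 3) ^ 2) = E1
  generalize Real.exp (khat * (∑ m, y m) ^ 2) = E2
  field_simp
  ring

lemma fderivG_single (μ κ k khat : ℝ) (y : Fin 3 → ℝ) (j r : Fin 3) :
    fderiv ℝ (fun y : Fin 3 → ℝ =>
        2 * μ * Real.exp (k * ∑ i, (y i - (∑ m, y m) / 3) ^ 2) * (y j - (∑ m, y m) / 3)
        + κ * Real.exp (khat * (∑ m, y m) ^ 2) * (∑ m, y m)) y (Pi.single r 1)
    = 2 * μ * Real.exp (k * ∑ i, (y i - (∑ m, y m) / 3) ^ 2)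
        * ((if j = r then (1:ℝ) else 0) - 1 / 3
            + k * (2 * (y r - (∑ m, y m) / 3)) * (y j - (∑ m, y m) / 3))
      + κ * Real.exp (khat * (∑ m, y m) ^ 2)
        * (1 + khat * (2 * (∑ m, y m)) * (∑ m, y m)) := by
  have hS : HasFDerivAt (fun z : Fin 3 → ℝ => ∑ i, (z i - (∑ m, z m) / 3) ^ 2)
      (∑ i : Fin 3, (2 * (y i - (∑ m, y m) / 3)) • gL i) y :=
    HasFDerivAt.fun_sum (fun i _ => hasFDerivAt_gsq i y)
  have hc := ((hS.const_mul k).exp.const_mul (2 * μ))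
  have hd := hasFDerivAt_g j y
  have h1 := hc.fun_mul hd
  have hc2 := (((hasFDerivAt_ssq y).const_mul khat).exp.const_mul κ)
  have h2 := hc2.fun_mul (hasFDerivAt_sum3 y)
  have hG := h1.fun_add h2
  rw [hG.fderiv]
  simp only [ContinuousLinearMap.add_apply, ContinuousLinearMap.smul_apply,
    ContinuousLinearMap.sum_apply, gL_apply, sumL_apply, smul_eq_mul]
  have hsingle : ∑ m : Fin 3, (Pi.single r 1 : Fin 3 → ℝ) m = 1 := by
    simp [Finset.sum_pi_single']
  rw [hsingle]
  have hsum : ∑ i : Fin 3, 2 * (y i - (∑ m, y m) / 3) * ((Pi.single r 1 : Fin 3 → ℝ) i - 1 / 3)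
      = 2 * (y r - (∑ m, y m) / 3) := by
    set s := ∑ m : Fin 3, y m with hs
    fin_cases r <;>
      simp [Fin.sum_univ_three, Pi.single_apply] <;>
      rw [hs] <;> rw [Fin.sum_univ_three] <;> ring
  rw [hsum, Pi.single_apply]
  ring


/-- For the three-dimensional exponentiated Hencky energy
`W_eH(x₁,x₂,x₃) = (μ/k)·exp(k·∑ᵢ(xᵢ - s/3)²) + (κ/(2k̂))·exp(k̂·s²)` in the principal
logarithmic stretches `xᵢ = log λᵢ`, the limiting value of `χ`, i.e.
`½(∂²W/∂x_k² - ∂²W/∂x_k∂x_l) - ∂W/∂x_l` evaluated at equal stretches `λ_l = λ_k`, equals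
`μ·exp(k·∑ⱼ(log λ̄ⱼ)²) - τ_k`, where
`τ_k = 2μ·exp(k·∑ⱼ(log λ̄ⱼ)²)·log λ̄_k + κ·exp(k̂·(∑ⱼ log λⱼ)²)·∑ⱼ log λⱼ` and
`log λ̄ⱼ = log λⱼ - (∑ᵢ log λᵢ)/3`. -/
theorem expHencky_chi_equal_stretches (μ κ k khat : ℝ) (hμ : 0 < μ) (hκ : 0 < κ)
    (hk : 0 < k) (hkhat : 0 < khat)
    (kk ll : Fin 3) (hkl : kk ≠ ll) (lam : Fin 3 → ℝ) (hpos : ∀ i, 0 < lam i)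
    (heq : lam ll = lam kk) :
    (1 / 2) *
        ((fderiv ℝ (fun y : Fin 3 → ℝ =>
            fderiv ℝ (fun z : Fin 3 → ℝ =>
                μ / k * Real.exp (k * ∑ i, (z i - (∑ m, z m) / 3) ^ 2)
                + κ / (2 * khat) * Real.exp (khat * (∑ m, z m) ^ 2)) y (Pi.single kk 1))
            (fun i => Real.log (lam i)) (Pi.single kk 1))
          - (fderiv ℝ (fun y : Fin 3 → ℝ =>
            fderiv ℝ (fun z : Fin 3 → ℝ =>
                μ / k * Real.exp (k * ∑ i, (z i - (∑ m, z m) / 3) ^ 2)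
                + κ / (2 * khat) * Real.exp (khat * (∑ m, z m) ^ 2)) y (Pi.single kk 1))
            (fun i => Real.log (lam i)) (Pi.single ll 1)))
      - fderiv ℝ (fun z : Fin 3 → ℝ =>
            μ / k * Real.exp (k * ∑ i, (z i - (∑ m, z m) / 3) ^ 2)
            + κ / (2 * khat) * Real.exp (khat * (∑ m, z m) ^ 2))
          (fun i => Real.log (lam i)) (Pi.single ll 1) =
    μ * Real.exp (k * ∑ j, (Real.log (lam j) - (∑ i, Real.log (lam i)) / 3) ^ 2)
      - (2 * μ * Real.exp (k * ∑ j, (Real.log (lam j) - (∑ i, Real.log (lam i)) / 3) ^ 2)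
            * (Real.log (lam kk) - (∑ i, Real.log (lam i)) / 3)
          + κ * Real.exp (khat * (∑ j, Real.log (lam j)) ^ 2) * ∑ j, Real.log (lam j)) := by
  have hL : Real.log (lam ll) = Real.log (lam kk) := by rw [heq]
  have hEq1 : (fun y : Fin 3 → ℝ => fderiv ℝ (fun z : Fin 3 → ℝ =>
        μ / k * Real.exp (k * ∑ i, (z i - (∑ m, z m) / 3) ^ 2)
        + κ / (2 * khat) * Real.exp (khat * (∑ m, z m) ^ 2)) y (Pi.single kk 1))
      = fun y : Fin 3 → ℝ =>
        2 * μ * Real.exp (k * ∑ i, (y i - (∑ m, y m) / 3) ^ 2) * (y kk - (∑ m, y m) / 3)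
        + κ * Real.exp (khat * (∑ m, y m) ^ 2) * (∑ m, y m) :=
    funext fun y => fderivW_single μ κ k khat hk.ne' hkhat.ne' y kk
  rw [hEq1, fderivG_single, fderivG_single,
    fderivW_single μ κ k khat hk.ne' hkhat.ne' _ ll]
  simp only [if_pos rfl, if_neg hkl, hL, eq_self_iff_true, if_true]
  ring
end

section
/- For an incompressible uniaxial deformation F = diag(λ, λ^{-1/2}, λ^{-1/2}) of the exponentiated Hencky material, imposing the stress boundary conditions S₁² = S₁³ = 0 yields the axial nominal stress S₁¹ = 3μ·exp((3/2)·k·(log λ)²)·(log λ)/λ. -/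
/-- For an incompressible uniaxial deformation `F = diag(λ, λ^{-1/2}, λ^{-1/2})` of the
exponentiated Hencky material, with principal first Piola-Kirchhoff stresses
`S₁ⁱ = -p/λᵢ + 2μ·exp(k·∑ⱼ(log λⱼ)²)·(log λᵢ)/λᵢ` (`p` the hydrostatic pressure),
imposing the lateral stress boundary conditions `S₁² = S₁³ = 0` yields the axial
nominal stress `S₁¹ = 3μ·exp((3/2)·k·(log λ)²)·(log λ)/λ`. -/
theorem expHencky_uniaxial_incompressible (μ k : ℝ) (hμ : 0 < μ) (hk : 0 < k)
    (lam : Fin 3 → ℝ) (lambda p : ℝ) (hlam : 0 < lambda)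
    (h0 : lam 0 = lambda) (h1 : lam 1 = lambda ^ (-(1 : ℝ) / 2))
    (h2 : lam 2 = lambda ^ (-(1 : ℝ) / 2))
    (S : Fin 3 → ℝ)
    (hS : ∀ i, S i = -p / lam i
        + 2 * μ * Real.exp (k * ∑ j, (Real.log (lam j)) ^ 2) * Real.log (lam i) / lam i)
    (hlat1 : S 1 = 0) (hlat2 : S 2 = 0) :
    S 0 = 3 * μ * Real.exp ((3 / 2) * k * (Real.log lambda) ^ 2)
        * Real.log lambda / lambda := by
  set L := Real.log lambda with hL
  have hlog1 : Real.log (lam 1) = -(1/2) * L := by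
    rw [h1, Real.log_rpow hlam]; ring
  have hsum : (∑ j, (Real.log (lam j)) ^ 2) = (3/2) * L ^ 2 := by
    rw [Fin.sum_univ_three, h0, h1, h2, Real.log_rpow hlam]; ring
  have hE : Real.exp (k * ∑ j, (Real.log (lam j)) ^ 2)
      = Real.exp ((3/2) * k * L ^ 2) := by rw [hsum]; ring_nf
  set E := Real.exp ((3/2) * k * L ^ 2) with hEdef
  have hlam1pos : 0 < lam 1 := by rw [h1]; positivity
  have hlam1ne : lam 1 ≠ 0 := ne_of_gt hlam1pos
  have hp : p = -(μ * E * L) := by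
    have := hS 1
    rw [hlat1, hE, hlog1] at this
    field_simp at this
    have hz : (p + μ * E * L) * (2 * lam 1) = 0 := by linear_combination (2 * lam 1) * this
    rcases mul_eq_zero.1 hz with h | h
    · linarith
    · exact absurd (by linarith : lam 1 = 0) hlam1ne
  have := hS 0
  rw [hE, h0, hp] at this
  rw [this]
  field_simp
  ring
end
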